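/- Let A = {|a_1⟩,…,|a_d⟩} and B = {|b_1⟩,…,|b_d⟩} be orthonormal bases of ℂ^d (the eigenbases of two non-degenerate observables) and let α > 0, α ≠ 1. Then the infimum over all density matrices ρ of T_α(p_ρ^A) + T_α(q_ρ^{A→B}) equals min_{1≤i≤d} (1/(1−α))(Σ_{j=1}^d |⟨a_i|b_j⟩|^{2α} − 1), and the infimum is attained at ρ = |a_i⟩⟨a_i| for a minimizing index i. -/

import Mathlib

open Matrix
open scoped BigOperators ComplexOrder

/-- The inner product ⟨x|y⟩ on ℂ^d. -/
noncomputable def qinner {d : ℕ} (x y : Fin d → ℂ) : ℂ := star x ⬝ᵥ y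

/-- `a` is an orthonormal basis of ℂ^d (d orthonormal vectors). -/
def IsONB {d : ℕ} (a : Fin d → (Fin d → ℂ)) : Prop :=
  ∀ i j, qinner (a i) (a j) = if i = j then 1 else 0

/-- Measurement distribution p_ρ^B(j) = ⟨b_j|ρ|b_j⟩. -/
noncomputable def probB {d : ℕ} (ρ : Matrix (Fin d) (Fin d) ℂ)
    (b : Fin d → (Fin d → ℂ)) (j : Fin d) : ℝ :=
  (qinner (b j) (ρ *ᵥ b j)).re

/-- Distribution of a B-measurement after a non-selective A-measurement:
q_ρ^{A→B}(j) = Σ_i ⟨a_i|ρ|a_i⟩ |⟨a_i|b_j⟩|². -/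
noncomputable def probAB {d : ℕ} (ρ : Matrix (Fin d) (Fin d) ℂ)
    (a b : Fin d → (Fin d → ℂ)) (j : Fin d) : ℝ :=
  ∑ i, probB ρ a i * ‖qinner (a i) (b j)‖ ^ 2

/-- Tsallis entropy of order α. -/
noncomputable def tsallis {d : ℕ} (α : ℝ) (p : Fin d → ℝ) : ℝ :=
  (1 / (1 - α)) * ((∑ j, p j ^ α) - 1)

/-- Rank-one projector |v⟩⟨v|. -/
noncomputable def proj {d : ℕ} (v : Fin d → ℂ) : Matrix (Fin d) (Fin d) ℂ :=
  vecMulVec v (star v)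

/-! ### Auxiliary lemmas -/

lemma onb_complete {d : ℕ} {a : Fin d → (Fin d → ℂ)} (ha : IsONB a) (k l : Fin d) :
    ∑ i, (starRingEnd ℂ) (a i k) * a i l = if k = l then 1 else 0 := by
  have hA : (Matrix.of a) * (Matrix.of a)ᴴ = 1 := by
    ext i j
    have := ha j i
    simp only [qinner, dotProduct, Pi.star_apply] at this
    simp only [Matrix.mul_apply, Matrix.conjTranspose_apply, Matrix.of_apply, Matrix.one_apply]
    calc ∑ k, a i k * star (a j k) = ∑ k, star (a j k) * a i k :=
          Finset.sum_congr rfl fun k _ => mul_comm _ _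
      _ = if j = i then 1 else 0 := this
      _ = if i = j then 1 else 0 := by simp [eq_comm]
  have hA' : (Matrix.of a)ᴴ * (Matrix.of a) = 1 := mul_eq_one_comm.mp hA
  have := congrFun (congrFun hA' k) l
  simp only [Matrix.mul_apply, Matrix.conjTranspose_apply, Matrix.of_apply,
    Matrix.one_apply] at this
  calc ∑ i, (starRingEnd ℂ) (a i k) * a i l = ∑ i, star (a i k) * a i l := rfl
    _ = if k = l then 1 else 0 := this

lemma sum_qinner_trace {d : ℕ} {a : Fin d → (Fin d → ℂ)} (ha : IsONB a)
    (ρ : Matrix (Fin d) (Fin d) ℂ) : ∑ i, qinner (a i) (ρ *ᵥ a i) = ρ.trace := by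
  have key := onb_complete ha
  calc ∑ i, qinner (a i) (ρ *ᵥ a i)
      = ∑ i, ∑ k, ∑ l, ρ k l * ((starRingEnd ℂ) (a i k) * a i l) := by
        refine Finset.sum_congr rfl fun i _ => ?_
        simp only [qinner, dotProduct, Pi.star_apply, Matrix.mulVec, Finset.mul_sum]
        exact Finset.sum_congr rfl fun k _ => Finset.sum_congr rfl fun l _ => by
          simp only [Complex.star_def]; ring
    _ = ∑ k, ∑ l, ρ k l * ∑ i, (starRingEnd ℂ) (a i k) * a i l := by
        rw [Finset.sum_comm]
        refine Finset.sum_congr rfl fun k _ => ?_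
        rw [Finset.sum_comm]
        exact Finset.sum_congr rfl fun l _ => (Finset.mul_sum _ _ _).symm
    _ = ∑ k, ∑ l, ρ k l * (if k = l then 1 else 0) := by
        exact Finset.sum_congr rfl fun k _ => Finset.sum_congr rfl fun l _ => by rw [key]
    _ = ρ.trace := by simp [Matrix.trace, Matrix.diag]

lemma sum_normsq_qinner {d : ℕ} {b : Fin d → (Fin d → ℂ)} (hb : IsONB b)
    (v : Fin d → ℂ) : ∑ j, ‖qinner v (b j)‖ ^ 2 = (qinner v v).re := by
  have key := onb_complete hb
  have hsq : ∀ z : ℂ, ‖z‖ ^ 2 = ((starRingEnd ℂ) z * z).re := by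
    intro z
    rw [← Complex.normSq_eq_conj_mul_self, Complex.ofReal_re, Complex.sq_norm]
  have hC : ∑ j, (starRingEnd ℂ) (qinner v (b j)) * qinner v (b j) = qinner v v := by
    calc ∑ j, (starRingEnd ℂ) (qinner v (b j)) * qinner v (b j)
        = ∑ j, ∑ l, ∑ k, (v l * (starRingEnd ℂ) (v k)) *
            ((starRingEnd ℂ) (b j l) * b j k) := by
          refine Finset.sum_congr rfl fun j _ => ?_
          simp only [qinner, dotProduct, Pi.star_apply, map_sum, _root_.map_mul, Complex.star_def,
            Finset.sum_mul, Finset.mul_sum, Complex.conj_conj]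
          rw [Finset.sum_comm]
          exact Finset.sum_congr rfl fun l _ => Finset.sum_congr rfl fun k _ => by ring
      _ = ∑ l, ∑ k, (v l * (starRingEnd ℂ) (v k)) *
            ∑ j, (starRingEnd ℂ) (b j l) * b j k := by
          rw [Finset.sum_comm]
          refine Finset.sum_congr rfl fun l _ => ?_
          rw [Finset.sum_comm]
          exact Finset.sum_congr rfl fun k _ => (Finset.mul_sum _ _ _).symm
      _ = ∑ l, ∑ k, (v l * (starRingEnd ℂ) (v k)) * (if l = k then 1 else 0) := by
          exact Finset.sum_congr rfl fun l _ => Finset.sum_congr rfl fun k _ => by rw [key]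
      _ = ∑ l, v l * (starRingEnd ℂ) (v l) := by simp
      _ = qinner v v := by
          simp only [qinner, dotProduct, Pi.star_apply, Complex.star_def]
          exact Finset.sum_congr rfl fun l _ => mul_comm _ _
  calc ∑ j, ‖qinner v (b j)‖ ^ 2
      = ∑ j, ((starRingEnd ℂ) (qinner v (b j)) * qinner v (b j)).re :=
        Finset.sum_congr rfl fun j _ => hsq _
    _ = (∑ j, (starRingEnd ℂ) (qinner v (b j)) * qinner v (b j)).re :=
        (Complex.re_sum _ _).symm
    _ = (qinner v v).re := by rw [hC]

lemma qinner_proj {d : ℕ} (v x y : Fin d → ℂ) :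
    qinner x (proj v *ᵥ y) = qinner x v * qinner v y := by
  simp only [qinner, proj, Matrix.mulVec, dotProduct, Matrix.vecMulVec_apply, Pi.star_apply,
    Finset.mul_sum, Finset.sum_mul]
  rw [Finset.sum_comm]
  exact Finset.sum_congr rfl fun m _ => Finset.sum_congr rfl fun l _ => by ring

lemma proj_posSemidef {d : ℕ} (v : Fin d → ℂ) : (proj v).PosSemidef := by
  have h : proj v = (Matrix.of fun (_ : Fin 1) k => star (v k))ᴴ *
      (Matrix.of fun (_ : Fin 1) k => star (v k)) := by
    ext k l
    simp [proj, Matrix.mul_apply, Matrix.vecMulVec_apply, Matrix.conjTranspose_apply]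
  rw [h]
  exact Matrix.posSemidef_conjTranspose_mul_self _

lemma proj_trace {d : ℕ} {v : Fin d → ℂ} (hv : qinner v v = 1) : (proj v).trace = 1 := by
  simp only [Matrix.trace, Matrix.diag, proj, Matrix.vecMulVec_apply, Pi.star_apply]
  rw [← hv]
  simp only [qinner, dotProduct, Pi.star_apply]
  exact Finset.sum_congr rfl fun k _ => mul_comm _ _

lemma probB_proj {d : ℕ} {a : Fin d → (Fin d → ℂ)} (ha : IsONB a) (i k : Fin d) :
    probB (proj (a i)) a k = if k = i then 1 else 0 := by
  unfold probB
  rw [qinner_proj, ha, ha]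
  by_cases hk : k = i
  · subst hk; simp
  · have h2 : ¬ i = k := fun h' => hk h'.symm
    simp [hk, h2]

lemma rpow_two_mul (x : ℝ) (hx : 0 ≤ x) (α : ℝ) : x ^ (2 * α) = (x ^ 2) ^ α := by
  rw [← Real.rpow_natCast x 2, ← Real.rpow_mul hx]
  norm_num

lemma tsallis_nonneg {d : ℕ} {α : ℝ} (hα : 0 < α) (hα1 : α ≠ 1) (p : Fin d → ℝ)
    (hp0 : ∀ i, 0 ≤ p i) (hp1 : ∑ i, p i = 1) : 0 ≤ tsallis α p := by
  have hple : ∀ i, p i ≤ 1 := fun i =>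
    hp1 ▸ Finset.single_le_sum (fun j _ => hp0 j) (Finset.mem_univ i)
  rcases lt_or_gt_of_ne hα1 with h | h
  · have hstep : ∀ i, p i ≤ p i ^ α := by
      intro i
      rcases eq_or_lt_of_le (hp0 i) with h0 | h0
      · rw [← h0, Real.zero_rpow hα.ne']
      · calc p i = p i ^ (1 : ℝ) := (Real.rpow_one _).symm
          _ ≤ p i ^ α := Real.rpow_le_rpow_of_exponent_ge h0 (hple i) h.le
    have hsum : 1 ≤ ∑ i, p i ^ α := hp1 ▸ Finset.sum_le_sum fun i _ => hstep i
    have h1α : (0:ℝ) < 1 - α := by linarith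
    have hco : (0:ℝ) ≤ 1 / (1 - α) := by positivity
    unfold tsallis
    nlinarith
  · have hstep : ∀ i, p i ^ α ≤ p i := by
      intro i
      rcases eq_or_lt_of_le (hp0 i) with h0 | h0
      · rw [← h0, Real.zero_rpow hα.ne']
      · calc p i ^ α ≤ p i ^ (1 : ℝ) :=
            Real.rpow_le_rpow_of_exponent_ge h0 (hple i) h.le
          _ = p i := Real.rpow_one _
    have hsum : ∑ i, p i ^ α ≤ 1 := hp1 ▸ Finset.sum_le_sum fun i _ => hstep i
    have hco : 1 / (1 - α) ≤ 0 := by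
      apply div_nonpos_of_nonneg_of_nonpos <;> linarith
    unfold tsallis
    nlinarith

lemma tsallis_bound {d : ℕ} {α : ℝ} (hα : 0 < α) (hα1 : α ≠ 1)
    (p : Fin d → ℝ) (hp0 : ∀ i, 0 ≤ p i) (hp1 : ∑ i, p i = 1)
    (c : Fin d → Fin d → ℝ) (hc0 : ∀ i j, 0 ≤ c i j)
    (i₀ : Fin d) (hi₀ : ∀ k, tsallis α (c i₀) ≤ tsallis α (c k)) :
    tsallis α (c i₀) ≤ tsallis α p + tsallis α (fun j => ∑ i, p i * c i j) := by
  have hTp : 0 ≤ tsallis α p := tsallis_nonneg hα hα1 p hp0 hp1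
  -- Jensen per coordinate
  have hJ : (1 / (1 - α)) * (∑ j, ∑ i, p i * c i j ^ α) ≤
      (1 / (1 - α)) * (∑ j, (∑ i, p i * c i j) ^ α) := by
    rcases lt_or_gt_of_ne hα1 with h | h
    · have hcon := Real.concaveOn_rpow hα.le h.le
      have hj : ∀ j, ∑ i, p i * c i j ^ α ≤ (∑ i, p i * c i j) ^ α := by
        intro j
        have := hcon.le_map_sum (t := Finset.univ) (w := p) (p := fun i => c i j)
          (fun i _ => hp0 i) hp1 (fun i _ => hc0 i j)
        simpa [smul_eq_mul] using this
      have h1α : (0:ℝ) < 1 - α := by linarith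
      have hco : (0:ℝ) ≤ 1 / (1 - α) := div_nonneg zero_le_one h1α.le
      exact mul_le_mul_of_nonneg_left (Finset.sum_le_sum fun j _ => hj j) hco
    · have hcon := convexOn_rpow h.le
      have hj : ∀ j, (∑ i, p i * c i j) ^ α ≤ ∑ i, p i * c i j ^ α := by
        intro j
        have := hcon.map_sum_le (t := Finset.univ) (w := p) (p := fun i => c i j)
          (fun i _ => hp0 i) hp1 (fun i _ => hc0 i j)
        simpa [smul_eq_mul] using this
      have hco : 1 / (1 - α) ≤ 0 := by
        apply div_nonpos_of_nonneg_of_nonpos <;> linarith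
      exact mul_le_mul_of_nonpos_left (Finset.sum_le_sum fun j _ => hj j) hco
  have hswap : ∑ i, p i * ∑ j, c i j ^ α = ∑ j, ∑ i, p i * c i j ^ α := by
    rw [Finset.sum_comm]
    exact Finset.sum_congr rfl fun i _ => Finset.mul_sum _ _ _
  have hsum_pf : ∑ i, p i * tsallis α (c i) =
      (1 / (1 - α)) * ((∑ i, p i * ∑ j, c i j ^ α) - 1) := by
    calc ∑ i, p i * tsallis α (c i)
        = ∑ i, ((1 / (1 - α)) * (p i * ∑ j, c i j ^ α) - (1 / (1 - α)) * p i) := by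
          refine Finset.sum_congr rfl fun i _ => ?_
          unfold tsallis; ring
      _ = (1 / (1 - α)) * (∑ i, p i * ∑ j, c i j ^ α) - (1 / (1 - α)) * ∑ i, p i := by
          rw [Finset.sum_sub_distrib, ← Finset.mul_sum, ← Finset.mul_sum]
      _ = (1 / (1 - α)) * ((∑ i, p i * ∑ j, c i j ^ α) - 1) := by rw [hp1]; ring
  have hmix : tsallis α (c i₀) ≤ ∑ i, p i * tsallis α (c i) := by
    calc tsallis α (c i₀) = ∑ i, p i * tsallis α (c i₀) := by
          rw [← Finset.sum_mul, hp1, one_mul]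
      _ ≤ ∑ i, p i * tsallis α (c i) :=
          Finset.sum_le_sum fun i _ => mul_le_mul_of_nonneg_left (hi₀ i) (hp0 i)
  have hq : ∑ i, p i * tsallis α (c i) ≤ tsallis α (fun j => ∑ i, p i * c i j) := by
    rw [hsum_pf, hswap]
    unfold tsallis
    nlinarith [hJ]
  linarith

theorem tsallis_succ_EUR {d : ℕ} (hd : 0 < d) (a b : Fin d → (Fin d → ℂ))
    (ha : IsONB a) (hb : IsONB b) (α : ℝ) (hα : 0 < α) (hα1 : α ≠ 1) :
    IsLeast {x : ℝ | ∃ ρ : Matrix (Fin d) (Fin d) ℂ, ρ.PosSemidef ∧ ρ.trace = 1 ∧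
        x = tsallis α (probB ρ a) + tsallis α (probAB ρ a b)}
      (⨅ i : Fin d, (1 / (1 - α)) * ((∑ j, ‖qinner (a i) (b j)‖ ^ (2 * α)) - 1)) ∧
    ∃ i : Fin d,
      (∀ k : Fin d, (1 / (1 - α)) * ((∑ j, ‖qinner (a i) (b j)‖ ^ (2 * α)) - 1)
          ≤ (1 / (1 - α)) * ((∑ j, ‖qinner (a k) (b j)‖ ^ (2 * α)) - 1)) ∧
      tsallis α (probB (proj (a i)) a) + tsallis α (probAB (proj (a i)) a b)
        = ⨅ k : Fin d, (1 / (1 - α)) * ((∑ j, ‖qinner (a k) (b j)‖ ^ (2 * α)) - 1) := by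
  haveI : Nonempty (Fin d) := ⟨⟨0, hd⟩⟩
  set c : Fin d → Fin d → ℝ := fun i j => ‖qinner (a i) (b j)‖ ^ 2 with hc
  set f : Fin d → ℝ := fun i => (1 / (1 - α)) * ((∑ j, ‖qinner (a i) (b j)‖ ^ (2 * α)) - 1)
    with hfdef
  have hfeq : ∀ i, f i = tsallis α (c i) := by
    intro i
    unfold tsallis
    simp only [hfdef, hc]
    congr 2
    exact Finset.sum_congr rfl fun j _ => rpow_two_mul _ (norm_nonneg _) α
  obtain ⟨i₀, hi₀⟩ := Finite.exists_min f
  have hinf : (⨅ i, f i) = f i₀ :=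
    le_antisymm (ciInf_le (Finite.bddBelow_range f) i₀) (le_ciInf hi₀)
  have hc0 : ∀ i j, 0 ≤ c i j := fun i j => by positivity
  have hi₀' : ∀ k, tsallis α (c i₀) ≤ tsallis α (c k) := by
    intro k; rw [← hfeq, ← hfeq]; exact hi₀ k
  -- equality at the projector
  have hqii : qinner (a i₀) (a i₀) = 1 := by rw [ha i₀ i₀]; simp
  have hpB : probB (proj (a i₀)) a = fun k => if k = i₀ then 1 else 0 :=
    funext fun k => probB_proj ha i₀ k
  have hpAB : probAB (proj (a i₀)) a b = c i₀ := by
    funext j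
    simp only [probAB, hpB]
    rw [Finset.sum_eq_single i₀]
    · simp [hc]
    · intro k _ hk; simp [hk]
    · intro hk; exact absurd (Finset.mem_univ i₀) hk
  have hT0 : tsallis α (probB (proj (a i₀)) a) = 0 := by
    rw [hpB]
    unfold tsallis
    have : ∀ k : Fin d, ((if k = i₀ then (1:ℝ) else 0) : ℝ) ^ α =
        if k = i₀ then (1:ℝ) else 0 := by
      intro k
      split
      · exact Real.one_rpow α
      · exact Real.zero_rpow hα.ne'
    rw [Finset.sum_congr rfl fun k _ => this k]
    simp
  have hval : tsallis α (probB (proj (a i₀)) a) + tsallis α (probAB (proj (a i₀)) a b)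
      = f i₀ := by
    rw [hT0, hpAB, hfeq i₀, zero_add]
  -- lower bound for arbitrary states
  have hlb : ∀ x ∈ {x : ℝ | ∃ ρ : Matrix (Fin d) (Fin d) ℂ, ρ.PosSemidef ∧ ρ.trace = 1 ∧
      x = tsallis α (probB ρ a) + tsallis α (probAB ρ a b)}, f i₀ ≤ x := by
    rintro x ⟨ρ, hρ, hρ1, rfl⟩
    have hp0 : ∀ i, 0 ≤ probB ρ a i := by
      intro i
      have := hρ.dotProduct_mulVec_nonneg (a i)
      have h := (Complex.le_def.mp this).1
      simpa [probB, qinner] using h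
    have hp1 : ∑ i, probB ρ a i = 1 := by
      unfold probB
      rw [← Complex.re_sum, sum_qinner_trace ha ρ, hρ1]
      simp
    have hAB : probAB ρ a b = fun j => ∑ i, probB ρ a i * c i j := rfl
    rw [hAB]
    have := tsallis_bound hα hα1 (probB ρ a) hp0 hp1 c hc0 i₀ hi₀'
    rw [hfeq i₀]
    exact this
  constructor
  · constructor
    · refine ⟨proj (a i₀), proj_posSemidef _, proj_trace hqii, ?_⟩
      rw [hval, ← hinf]
    · intro x hx
      rw [hinf]
      exact hlb x hx
  · exact ⟨i₀, hi₀, by rw [hval, ← hinf]⟩
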